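/- arXiv:0810.0097 — 2 statements merged into one kernel-verified Lean document; each statement's English description precedes it below -/
import Mathlib

section
/- Let a > 0 and b > a+1 be reals. Then for every integer k ≥ 1, the sum I(a,b,k) = ∑_{t=1}^∞ t^a/(t+k)^b is finite, and there exists a constant C = C(a,b) such that I(a,b,k) ≤ C·k^{1+a−b} for all k ≥ 1. -/
open Finset Real

lemma bern_key {s x : ℝ} (hs : 0 < s) (hx : 1 ≤ x) :
    s * x ^ s ≤ (x + 1) * ((x + 1) ^ s - x ^ s) := by
  have hx0 : (0:ℝ) < x := lt_of_lt_of_le one_pos hx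
  have hx1 : (0:ℝ) < x + 1 := by linarith
  have hA : (0:ℝ) < x ^ s := Real.rpow_pos_of_pos hx0 s
  have hB : (0:ℝ) < (x + 1) ^ s := Real.rpow_pos_of_pos hx1 s
  have hdiv : ((x + 1) / x) ^ s = (x + 1) ^ s / x ^ s :=
    Real.div_rpow hx1.le hx0.le s
  rcases le_or_gt 1 s with h1 | h1
  · have hb : 1 + s * (1 / x) ≤ (1 + 1 / x) ^ s :=
      one_add_mul_self_le_rpow_one_add (by have := one_div_pos.mpr hx0; linarith) h1
    have h2 : (1 + 1 / x) = (x + 1) / x := by field_simp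
    rw [h2, hdiv] at hb
    rw [le_div_iff₀ hA] at hb
    have : (1 + s * (1 / x)) * x ^ s = x ^ s + s * x ^ s / x := by
      field_simp
    rw [this] at hb
    have hxx : s * x ^ s / x * (x + 1) ≥ s * x ^ s := by
      rw [ge_iff_le, div_mul_eq_mul_div, le_div_iff₀ hx0]
      nlinarith
    nlinarith
  · have hb : (1 + -(1 / (x + 1))) ^ s ≤ 1 + s * -(1 / (x + 1)) :=
      rpow_one_add_le_one_add_mul_self (by rw [neg_le, neg_neg]; rw [div_le_one hx1]; linarith)
        hs.le h1.le
    have h2 : (1 + -(1 / (x + 1))) = x / (x + 1) := by field_simp; ring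
    have hdiv2 : (x / (x + 1)) ^ s = x ^ s / (x + 1) ^ s := Real.div_rpow hx0.le hx1.le s
    rw [h2, hdiv2, div_le_iff₀ hB] at hb
    have hAB : x ^ s ≤ (x + 1) ^ s := Real.rpow_le_rpow hx0.le (by linarith) hs.le
    have hs1 : s / (x + 1) ≤ 1 := by
      rw [div_le_one hx1]; linarith
    -- hb : x^s ≤ (1 - s/(x+1)) * (x+1)^s
    have hb' : x ^ s * (x + 1) ≤ (x + 1) * (x + 1) ^ s - s * (x + 1) ^ s := by
      have := mul_le_mul_of_nonneg_right hb hx1.le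
      have hexp : (1 + s * -(1 / (x + 1))) * (x + 1) ^ s * (x + 1)
          = (x + 1) * (x + 1) ^ s - s * (x + 1) ^ s := by
        field_simp; ring
      linarith [hexp ▸ this]
    nlinarith

lemma key_tel {s x : ℝ} (hs : 0 < s) (hx : 1 ≤ x) :
    (x + 1) ^ (-(1 + s)) ≤ s⁻¹ * (x ^ (-s) - (x + 1) ^ (-s)) := by
  have hx0 : (0:ℝ) < x := lt_of_lt_of_le one_pos hx
  have hx1 : (0:ℝ) < x + 1 := by linarith
  have hA : (0:ℝ) < x ^ s := Real.rpow_pos_of_pos hx0 s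
  have hB : (0:ℝ) < (x + 1) ^ s := Real.rpow_pos_of_pos hx1 s
  have e1 : (x + 1) ^ (-(1 + s)) = ((x + 1) * (x + 1) ^ s)⁻¹ := by
    rw [Real.rpow_neg hx1.le, Real.rpow_add hx1, Real.rpow_one]
  have e2 : x ^ (-s) = (x ^ s)⁻¹ := Real.rpow_neg hx0.le s
  have e3 : (x + 1) ^ (-s) = ((x + 1) ^ s)⁻¹ := Real.rpow_neg hx1.le s
  rw [e1, e2, e3]
  have hmain := bern_key hs hx
  have rhs : s⁻¹ * ((x ^ s)⁻¹ - ((x + 1) ^ s)⁻¹)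
      = ((x + 1) ^ s - x ^ s) / (s * (x ^ s * (x + 1) ^ s)) := by
    field_simp
  rw [inv_eq_one_div, rhs, div_le_div_iff₀ (by positivity) (by positivity)]
  nlinarith [mul_le_mul_of_nonneg_right hmain hB.le]

/-- For `a > 0` and `b > a + 1`, the series `I(a,b,k) = ∑_{t=1}^∞ t^a/(t+k)^b` converges
for every integer `k ≥ 1`, and there is a constant `C = C(a,b)` with
`I(a,b,k) ≤ C k^(1+a-b)` for all `k ≥ 1`. -/
theorem sum_pow_div_pow_le (a b : ℝ) (ha : 0 < a) (hb : a + 1 < b) :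
    ∃ C : ℝ, 0 < C ∧ ∀ k : ℕ, 1 ≤ k →
      Summable (fun t : ℕ => ((t : ℝ) + 1) ^ a / (((t : ℝ) + 1) + (k : ℝ)) ^ b) ∧
      (∑' t : ℕ, ((t : ℝ) + 1) ^ a / (((t : ℝ) + 1) + (k : ℝ)) ^ b) ≤
        C * (k : ℝ) ^ (1 + a - b) := by
  set s : ℝ := b - a - 1 with hs_def
  have hs : 0 < s := by simp [hs_def]; linarith
  have hb0 : 0 < b := by linarith
  refine ⟨1 + s⁻¹, by positivity, fun k hk => ?_⟩
  have hK : (1:ℝ) ≤ (k:ℝ) := by exact_mod_cast hk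
  have hK0 : (0:ℝ) < (k:ℝ) := by linarith
  -- termwise bound
  have hf0 : ∀ t : ℕ, 0 ≤ ((t : ℝ) + 1) ^ a / (((t : ℝ) + 1) + (k : ℝ)) ^ b := by
    intro t; positivity
  have hfle : ∀ t : ℕ, ((t : ℝ) + 1) ^ a / (((t : ℝ) + 1) + (k : ℝ)) ^ b
      ≤ ((t : ℝ) + 1) ^ (a - b) := by
    intro t
    have ht : (0:ℝ) < (t:ℝ) + 1 := by positivity
    rw [Real.rpow_sub ht]
    apply div_le_div₀ (by positivity) le_rfl (Real.rpow_pos_of_pos ht b)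
    exact Real.rpow_le_rpow ht.le (by linarith) hb0.le
  have hg : Summable (fun t : ℕ => ((t : ℝ) + 1) ^ (a - b)) := by
    have h := (Real.summable_one_div_nat_add_rpow 1 (b - a)).mpr (by linarith)
    refine h.congr fun n => ?_
    have hn : (0:ℝ) < (n:ℝ) + 1 := by positivity
    rw [abs_of_pos hn, one_div, ← Real.rpow_neg hn.le, neg_sub]
  have hsum : Summable (fun t : ℕ => ((t : ℝ) + 1) ^ a / (((t : ℝ) + 1) + (k : ℝ)) ^ b) :=
    Summable.of_nonneg_of_le hf0 hfle hg
  refine ⟨hsum, ?_⟩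
  rw [← Summable.sum_add_tsum_nat_add k hsum]
  have part1 : ∑ i ∈ Finset.range k, ((i : ℝ) + 1) ^ a / (((i : ℝ) + 1) + (k : ℝ)) ^ b
      ≤ (k : ℝ) ^ (1 + a - b) := by
    have e : (k : ℝ) ^ (1 + a - b) = (k:ℝ) * ((k:ℝ) ^ a / (k:ℝ) ^ b) := by
      rw [show (1 + a - b) = 1 + (a - b) by ring, Real.rpow_add hK0, Real.rpow_one,
        Real.rpow_sub hK0]
    rw [e]
    calc ∑ i ∈ Finset.range k, ((i : ℝ) + 1) ^ a / (((i : ℝ) + 1) + (k : ℝ)) ^ b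
        ≤ ∑ _i ∈ Finset.range k, ((k:ℝ) ^ a / (k:ℝ) ^ b) := by
          apply Finset.sum_le_sum
          intro i hi
          have hi' : (i:ℝ) + 1 ≤ (k:ℝ) := by
            have := Finset.mem_range.mp hi
            exact_mod_cast Nat.succ_le_of_lt this
          have hip : (0:ℝ) < (i:ℝ) + 1 := by positivity
          apply div_le_div₀ (by positivity)
            (Real.rpow_le_rpow hip.le hi' ha.le) (Real.rpow_pos_of_pos hK0 b)
          exact Real.rpow_le_rpow hK0.le (by linarith) hb0.le
      _ = (k:ℝ) * ((k:ℝ) ^ a / (k:ℝ) ^ b) := by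
          rw [Finset.sum_const, Finset.card_range, nsmul_eq_mul]
  have part2 : (∑' i : ℕ, (((i + k : ℕ) : ℝ) + 1) ^ a / ((((i + k : ℕ) : ℝ) + 1) + (k : ℝ)) ^ b)
      ≤ s⁻¹ * (k : ℝ) ^ (1 + a - b) := by
    have hKs : (k : ℝ) ^ (1 + a - b) = (k:ℝ) ^ (-s) := by
      congr 1; simp [hs_def]; ring
    rw [hKs]
    apply Real.tsum_le_of_sum_range_le (fun n => hf0 _)
    intro n
    have htel : ∑ i ∈ Finset.range n,
        (s⁻¹ * (((i:ℕ):ℝ) + (k:ℝ)) ^ (-s) - s⁻¹ * ((((i+1:ℕ)):ℝ) + (k:ℝ)) ^ (-s))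
        = s⁻¹ * (((0:ℕ):ℝ) + (k:ℝ)) ^ (-s) - s⁻¹ * (((n:ℕ):ℝ) + (k:ℝ)) ^ (-s) :=
      Finset.sum_range_sub' (fun i => s⁻¹ * (((i:ℕ):ℝ) + (k:ℝ)) ^ (-s)) n
    have hstep : ∀ i : ℕ, (((i + k : ℕ) : ℝ) + 1) ^ a / ((((i + k : ℕ) : ℝ) + 1) + (k : ℝ)) ^ b
        ≤ s⁻¹ * (((i:ℕ):ℝ) + (k:ℝ)) ^ (-s) - s⁻¹ * ((((i+1:ℕ)):ℝ) + (k:ℝ)) ^ (-s) := by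
      intro i
      set x : ℝ := (i:ℝ) + (k:ℝ) with hx_def
      have hx1 : 1 ≤ x := by simp [hx_def]; linarith [Nat.cast_nonneg (α := ℝ) i]
      have hx0 : (0:ℝ) < x := lt_of_lt_of_le one_pos hx1
      have ecast : ((i + k : ℕ) : ℝ) = x := by push_cast [hx_def]; ring
      have ecast2 : (((i+1:ℕ)):ℝ) + (k:ℝ) = x + 1 := by push_cast [hx_def]; ring
      rw [ecast, ecast2]
      calc (x + 1) ^ a / ((x + 1) + (k : ℝ)) ^ b
          ≤ (x + 1) ^ (a - b) := by
            have hx1p : (0:ℝ) < x + 1 := by linarith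
            rw [Real.rpow_sub hx1p]
            apply div_le_div₀ (by positivity) le_rfl (Real.rpow_pos_of_pos hx1p b)
            exact Real.rpow_le_rpow hx1p.le (by linarith) hb0.le
        _ = (x + 1) ^ (-(1 + s)) := by congr 1; simp [hs_def]
        _ ≤ s⁻¹ * (x ^ (-s) - (x + 1) ^ (-s)) := key_tel hs hx1
        _ = s⁻¹ * x ^ (-s) - s⁻¹ * (x + 1) ^ (-s) := by ring
    calc ∑ i ∈ Finset.range n,
          (((i + k : ℕ) : ℝ) + 1) ^ a / ((((i + k : ℕ) : ℝ) + 1) + (k : ℝ)) ^ b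
        ≤ ∑ i ∈ Finset.range n,
          (s⁻¹ * (((i:ℕ):ℝ) + (k:ℝ)) ^ (-s) - s⁻¹ * ((((i+1:ℕ)):ℝ) + (k:ℝ)) ^ (-s)) :=
          Finset.sum_le_sum fun i _ => hstep i
      _ = s⁻¹ * (((0:ℕ):ℝ) + (k:ℝ)) ^ (-s) - s⁻¹ * (((n:ℕ):ℝ) + (k:ℝ)) ^ (-s) := htel
      _ ≤ s⁻¹ * (k:ℝ) ^ (-s) := by
          have h1 : (0:ℝ) ≤ s⁻¹ * (((n:ℕ):ℝ) + (k:ℝ)) ^ (-s) := by positivity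
          simp only [Nat.cast_zero, zero_add]
          linarith
  calc (∑ i ∈ Finset.range k, ((i : ℝ) + 1) ^ a / (((i : ℝ) + 1) + (k : ℝ)) ^ b)
        + ∑' i : ℕ, (((i + k : ℕ) : ℝ) + 1) ^ a / ((((i + k : ℕ) : ℝ) + 1) + (k : ℝ)) ^ b
      ≤ (k : ℝ) ^ (1 + a - b) + s⁻¹ * (k : ℝ) ^ (1 + a - b) := add_le_add part1 part2
    _ = (1 + s⁻¹) * (k : ℝ) ^ (1 + a - b) := by ring
end

section
/- Let (Δ_i)_{i∈ℤ} be a finite martingale difference sequence adapted to a filtration, with f − E[f] = ∑_i Δ_i and f ∈ L^{2p} for an integer p ≥ 1. If there exist nonnegative random variables Ψ_i and a nonnegative summable sequence (c_i) with Δ_i² ≤ Ψ_i²·c_i almost surely and the (Ψ_i) identically distributed with E[Ψ_0^{2p}] < ∞, then E[(f − E f)^{2p}] ≤ (2p−1)^{2p}·E[Ψ_0^{2p}]·(∑_i c_i)^p. -/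
open MeasureTheory Finset

lemma two_pow_le_two_mul_factorial (k : ℕ) : 2 ^ k ≤ 2 * k.factorial := by
  induction k with
  | zero => simp
  | succ n ih =>
    rcases Nat.eq_zero_or_pos n with h | h
    · subst h; simp [Nat.factorial]
    · have h2 : 2 * n.factorial ≤ (n + 1) * n.factorial :=
        Nat.mul_le_mul_right _ (by omega)
      calc 2 ^ (n + 1) = 2 * 2 ^ n := by ring
        _ ≤ 2 * (2 * n.factorial) := by omega
        _ ≤ 2 * ((n + 1) * n.factorial) := by
            exact Nat.mul_le_mul_left _ h2
        _ = 2 * (n + 1).factorial := by rw [Nat.factorial_succ]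

lemma choose_le_two_mul_pow (m k : ℕ) : ((2 * m).choose k : ℝ) ≤ 2 * (m : ℝ) ^ k := by
  have h1 : ((2 * m).choose k : ℝ) ≤ ((2 * m : ℕ) ^ k : ℝ) / (k.factorial : ℝ) := by
    exact_mod_cast Nat.choose_le_pow_div k (2 * m)
  have hfac : (0 : ℝ) < (k.factorial : ℝ) := by exact_mod_cast k.factorial_pos
  have hcast : (2 : ℝ) ^ k ≤ 2 * (k.factorial : ℝ) := by
    exact_mod_cast two_pow_le_two_mul_factorial k
  have h2 : ((2 * m : ℕ) ^ k : ℝ) = 2 ^ k * (m : ℝ) ^ k := by push_cast; ring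
  rw [h2] at h1
  refine h1.trans ?_
  rw [div_le_iff₀ hfac]
  have hmk : (0:ℝ) ≤ (m : ℝ) ^ k := by positivity
  nlinarith [mul_le_mul_of_nonneg_right hcast hmk]

lemma sum_pow_le_two {x : ℝ} (h0 : 0 ≤ x) (h12 : x ≤ 1 / 2) (N : ℕ) :
    ∑ i ∈ range N, x ^ i ≤ 2 - 2 * x ^ N := by
  induction N with
  | zero => simp
  | succ n ih =>
    rw [Finset.sum_range_succ]
    have hxn : (0:ℝ) ≤ x ^ n := pow_nonneg h0 n
    have : x ^ (n + 1) = x * x ^ n := by ring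
    nlinarith

lemma key_scalar (m : ℕ) (hm : 1 ≤ m) (t : ℝ) (ht : 0 ≤ t) :
    (1 + t) ^ (2 * m) ≤ (1 + ((2 * m : ℝ) - 1) ^ 2 * t ^ 2) ^ m + (2 * m : ℝ) * t := by
  have hm1 : (1 : ℝ) ≤ (m : ℝ) := by exact_mod_cast hm
  rcases Nat.lt_or_ge m 2 with h2 | h2
  · have hmeq : m = 1 := by omega
    subst hmeq
    push_cast
    nlinarith [sq_nonneg t]
  · have hm2 : (2 : ℝ) ≤ (m : ℝ) := by exact_mod_cast h2
    by_cases hbig : 1 ≤ 2 * (m : ℝ) * ((m : ℝ) - 1) * t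
    · have hsq : (1 + t) ^ 2 ≤ 1 + ((2 * m : ℝ) - 1) ^ 2 * t ^ 2 := by
        push_cast
        nlinarith [mul_nonneg ht ht]
      calc (1 + t) ^ (2 * m) = ((1 + t) ^ 2) ^ m := by rw [← pow_mul]
        _ ≤ (1 + ((2 * m : ℝ) - 1) ^ 2 * t ^ 2) ^ m :=
            pow_le_pow_left₀ (by positivity) hsq m
        _ ≤ _ := le_add_of_nonneg_right (by positivity)
    · push_neg at hbig
      have hmt : (m : ℝ) * t ≤ 1 / 2 := by nlinarith
      obtain ⟨j, hj⟩ : ∃ j, 2 * m = j + 2 := ⟨2 * m - 2, by omega⟩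
      have hexp : (1 + t) ^ (2 * m) = ∑ k ∈ range (2 * m + 1), t ^ k * ((2 * m).choose k : ℝ) := by
        rw [add_comm (1:ℝ) t, add_pow]
        simp
      have htail : ∑ i ∈ range (j + 1), t ^ (i + 1 + 1) * (((j + 2).choose (i + 1 + 1)) : ℝ)
          ≤ 4 * (m : ℝ) ^ 2 * t ^ 2 := by
        have hterm : ∀ i ∈ range (j + 1),
            t ^ (i + 1 + 1) * (((j + 2).choose (i + 1 + 1)) : ℝ)
              ≤ 2 * (m : ℝ) ^ 2 * t ^ 2 * ((m : ℝ) * t) ^ i := by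
          intro i _
          have hc : (((j + 2).choose (i + 1 + 1)) : ℝ) ≤ 2 * (m : ℝ) ^ (i + 1 + 1) := by
            rw [← hj]; exact choose_le_two_mul_pow m (i + 1 + 1)
          calc t ^ (i + 1 + 1) * (((j + 2).choose (i + 1 + 1)) : ℝ)
              ≤ t ^ (i + 1 + 1) * (2 * (m : ℝ) ^ (i + 1 + 1)) :=
                mul_le_mul_of_nonneg_left hc (pow_nonneg ht _)
            _ = 2 * (m : ℝ) ^ 2 * t ^ 2 * ((m : ℝ) * t) ^ i := by
                rw [mul_pow]; ring
        calc ∑ i ∈ range (j + 1), t ^ (i + 1 + 1) * (((j + 2).choose (i + 1 + 1)) : ℝ)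
            ≤ ∑ i ∈ range (j + 1), 2 * (m : ℝ) ^ 2 * t ^ 2 * ((m : ℝ) * t) ^ i :=
              Finset.sum_le_sum hterm
          _ = 2 * (m : ℝ) ^ 2 * t ^ 2 * ∑ i ∈ range (j + 1), ((m : ℝ) * t) ^ i := by
              rw [Finset.mul_sum]
          _ ≤ 2 * (m : ℝ) ^ 2 * t ^ 2 * 2 := by
              refine mul_le_mul_of_nonneg_left ?_ (by positivity)
              refine (sum_pow_le_two (by positivity) hmt (j + 1)).trans ?_
              have : (0:ℝ) ≤ ((m:ℝ)*t) ^ (j+1) := by positivity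
              linarith
          _ = 4 * (m : ℝ) ^ 2 * t ^ 2 := by ring
      have hB : 1 + (m : ℝ) * (((2 * m : ℝ) - 1) ^ 2 * t ^ 2)
          ≤ (1 + ((2 * m : ℝ) - 1) ^ 2 * t ^ 2) ^ m := by
        refine one_add_mul_le_pow ?_ m
        have : (0:ℝ) ≤ ((2 * m : ℝ) - 1) ^ 2 * t ^ 2 := by positivity
        linarith
      have hnn : (0:ℝ) ≤ (4 * (m:ℝ) ^ 2 - 8 * (m:ℝ) + 1) * (m:ℝ) * t ^ 2 := by
        have h1 : (0:ℝ) ≤ 4 * (m:ℝ) ^ 2 - 8 * (m:ℝ) + 1 := by nlinarith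
        positivity
      have hcoef : 4 * (m : ℝ) ^ 2 * t ^ 2 ≤ (m : ℝ) * (((2 * m : ℝ) - 1) ^ 2 * t ^ 2) := by
        have hid : (m : ℝ) * (((2 * m : ℝ) - 1) ^ 2 * t ^ 2) - 4 * (m : ℝ) ^ 2 * t ^ 2
            = (4 * (m:ℝ) ^ 2 - 8 * (m:ℝ) + 1) * (m:ℝ) * t ^ 2 := by ring
        linarith [hid, hnn]
      have hjc : ((j : ℝ) + 2) = 2 * (m : ℝ) := by
        have h' : ((2 * m : ℕ) : ℝ) = ((j + 2 : ℕ) : ℝ) := by rw [hj]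
        push_cast at h'
        linarith
      rw [hexp, hj, Finset.sum_range_succ', Finset.sum_range_succ']
      simp only [pow_zero, pow_one, one_mul, Nat.choose_zero_right, Nat.choose_one_right,
        Nat.cast_one, mul_one, Nat.cast_add, Nat.cast_ofNat, zero_add]
      have hlin : t * ((j : ℝ) + 2) = 2 * (m : ℝ) * t := by rw [hjc]; ring
      push_cast
      push_cast at hjc hlin
      nlinarith [htail, hB, hcoef, hlin]

lemma lemA (m : ℕ) (hm : 1 ≤ m) (a b : ℝ) (ha : 0 ≤ a) (hb : 0 ≤ b) :
    (a + b) ^ (2 * m) ≤ (a ^ 2 + ((2 * m : ℝ) - 1) ^ 2 * b ^ 2) ^ m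
      + (2 * m : ℝ) * a ^ (2 * m - 1) * b := by
  have hm1 : (1 : ℝ) ≤ (m : ℝ) := by exact_mod_cast hm
  rcases eq_or_lt_of_le ha with h0 | hpos
  · have ha0 : a = 0 := h0.symm
    subst ha0
    have h1 : (1 : ℝ) ≤ ((2 * m : ℝ) - 1) ^ 2 := by nlinarith
    have hz : (0:ℝ) ^ (2 * m - 1) = 0 := zero_pow (by omega)
    rw [hz]
    have : b ^ (2 * m) ≤ (((2 * m : ℝ) - 1) ^ 2 * b ^ 2) ^ m := by
      calc b ^ (2 * m) = (b ^ 2) ^ m := by rw [← pow_mul]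
        _ ≤ (((2 * m : ℝ) - 1) ^ 2 * b ^ 2) ^ m :=
            pow_le_pow_left₀ (sq_nonneg b) (le_mul_of_one_le_left (sq_nonneg b) h1) m
    simpa using this
  · have hkey := key_scalar m hm (b / a) (div_nonneg hb hpos.le)
    have e1 : a + b = a * (1 + b / a) := by field_simp
    have e2 : a ^ 2 + ((2 * m : ℝ) - 1) ^ 2 * b ^ 2
        = a ^ 2 * (1 + ((2 * m : ℝ) - 1) ^ 2 * (b / a) ^ 2) := by
      field_simp
    have e3 : (2 * m : ℝ) * a ^ (2 * m - 1) * b = a ^ (2 * m) * ((2 * m : ℝ) * (b / a)) := by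
      have hpow : a ^ (2 * m) = a ^ (2 * m - 1) * a := by
        rw [← pow_succ]
        congr 1
        omega
      rw [hpow]
      field_simp
    rw [e1, e2, e3, mul_pow, mul_pow, ← pow_mul, ← mul_add]
    exact mul_le_mul_of_nonneg_left hkey (pow_nonneg hpos.le _)

lemma holder_pow {Ω : Type*} [MeasurableSpace Ω] {μ : Measure Ω}
    (u v : Ω → ℝ) (n j l : ℕ) (hj : 1 ≤ j) (hl : 1 ≤ l) (hjl : j + l = n)
    (hui : Integrable (fun ω => |u ω| ^ n) μ) (hvi : Integrable (fun ω => |v ω| ^ n) μ) :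
    ∫ ω, |u ω| ^ j * |v ω| ^ l ∂μ ≤
      ((∫ ω, |u ω| ^ n ∂μ) ^ ((n : ℝ)⁻¹)) ^ j * ((∫ ω, |v ω| ^ n ∂μ) ^ ((n : ℝ)⁻¹)) ^ l := by
  have hn : 0 < n := by omega
  have hnne : (n : ℝ) ≠ 0 := by positivity
  set A := ∫ ω, |u ω| ^ n ∂μ with hA
  set B := ∫ ω, |v ω| ^ n ∂μ with hB
  have hA0 : 0 ≤ A := integral_nonneg fun ω => by positivity
  have hB0 : 0 ≤ B := integral_nonneg fun ω => by positivity
  have hjn : (j : ℝ) + (l : ℝ) = (n : ℝ) := by exact_mod_cast congrArg (Nat.cast : ℕ → ℝ) hjl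
  rcases eq_or_lt_of_le hA0 with hAz | hApos
  · have h0 : (fun ω => |u ω| ^ n) =ᵐ[μ] 0 :=
      (integral_eq_zero_iff_of_nonneg (fun ω => by positivity) hui).1 hAz.symm
    have hz : (fun ω => |u ω| ^ j * |v ω| ^ l) =ᵐ[μ] 0 := by
      filter_upwards [h0] with ω hω
      have hu0 : |u ω| = 0 := by
        have := (pow_eq_zero_iff (n := n) (by omega)).1 hω
        simpa using this
      simp [hu0, zero_pow (by omega : j ≠ 0)]
    rw [integral_congr_ae hz]
    simp only [Pi.zero_apply, integral_zero]
    exact mul_nonneg (pow_nonneg (Real.rpow_nonneg hA0 _) _)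
      (pow_nonneg (Real.rpow_nonneg hB0 _) _)
  rcases eq_or_lt_of_le hB0 with hBz | hBpos
  · have h0 : (fun ω => |v ω| ^ n) =ᵐ[μ] 0 :=
      (integral_eq_zero_iff_of_nonneg (fun ω => by positivity) hvi).1 hBz.symm
    have hz : (fun ω => |u ω| ^ j * |v ω| ^ l) =ᵐ[μ] 0 := by
      filter_upwards [h0] with ω hω
      have hv0 : |v ω| = 0 := by
        have := (pow_eq_zero_iff (n := n) (by omega)).1 hω
        simpa using this
      simp [hv0, zero_pow (by omega : l ≠ 0)]
    rw [integral_congr_ae hz]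
    simp only [Pi.zero_apply, integral_zero]
    exact mul_nonneg (pow_nonneg (Real.rpow_nonneg hA0 _) _)
      (pow_nonneg (Real.rpow_nonneg hB0 _) _)
  · set a := A ^ ((n : ℝ)⁻¹) with ha
    set b := B ^ ((n : ℝ)⁻¹) with hb
    have hapos : 0 < a := Real.rpow_pos_of_pos hApos _
    have hbpos : 0 < b := Real.rpow_pos_of_pos hBpos _
    have han : a ^ n = A := Real.rpow_inv_natCast_pow hA0 hn.ne'
    have hbn : b ^ n = B := Real.rpow_inv_natCast_pow hB0 hn.ne'
    set C1 : ℝ := a ^ j * b ^ l * (j : ℝ) / ((n : ℝ) * A) with hC1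
    set C2 : ℝ := a ^ j * b ^ l * (l : ℝ) / ((n : ℝ) * B) with hC2
    have hpq : Real.HolderConjugate ((n : ℝ) / j) ((n : ℝ) / l) := by
      rw [Real.holderConjugate_iff]
      constructor
      · rw [lt_div_iff₀ (by positivity : (0:ℝ) < (j:ℝ))]
        have : j < n := by omega
        exact_mod_cast by simpa using this
      · rw [inv_div, inv_div, ← add_div, hjn, div_self hnne]
    have hpt : ∀ ω, |u ω| ^ j * |v ω| ^ l ≤ C1 * |u ω| ^ n + C2 * |v ω| ^ n := by
      intro ω
      set x := |u ω| with hx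
      set y := |v ω| with hy
      have hx0 : 0 ≤ x := abs_nonneg _
      have hy0 : 0 ≤ y := abs_nonneg _
      have hY := Real.young_inequality_of_nonneg
        (a := (x / a) ^ j) (b := (y / b) ^ l) (by positivity) (by positivity) hpq
      have hxp : ((x / a) ^ j : ℝ) ^ ((n : ℝ) / j) = (x / a) ^ n := by
        rw [← Real.rpow_natCast (x / a) j, ← Real.rpow_mul (by positivity),
          ← Real.rpow_natCast (x / a) n]
        congr 1
        field_simp
      have hyp : ((y / b) ^ l : ℝ) ^ ((n : ℝ) / l) = (y / b) ^ n := by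
        rw [← Real.rpow_natCast (y / b) l, ← Real.rpow_mul (by positivity),
          ← Real.rpow_natCast (y / b) n]
        congr 1
        field_simp
      rw [hxp, hyp] at hY
      have hY2 : (x / a) ^ j * (y / b) ^ l
          ≤ (x / a) ^ n * ((j : ℝ) / n) + (y / b) ^ n * ((l : ℝ) / n) := by
        have e1 : (x / a) ^ n / ((n : ℝ) / j) = (x / a) ^ n * ((j : ℝ) / n) := by
          rw [div_div_eq_mul_div]
          ring
        have e2 : (y / b) ^ n / ((n : ℝ) / l) = (y / b) ^ n * ((l : ℝ) / n) := by
          rw [div_div_eq_mul_div]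
          ring
        rw [e1, e2] at hY
        exact hY
      have hmul := mul_le_mul_of_nonneg_left hY2 (by positivity : (0:ℝ) ≤ a ^ j * b ^ l)
      have eL : a ^ j * b ^ l * ((x / a) ^ j * (y / b) ^ l) = x ^ j * y ^ l := by
        rw [div_pow, div_pow]
        field_simp
      have eR : a ^ j * b ^ l * ((x / a) ^ n * ((j : ℝ) / n) + (y / b) ^ n * ((l : ℝ) / n))
          = C1 * x ^ n + C2 * y ^ n := by
        rw [div_pow, div_pow, han, hbn, hC1, hC2]
        field_simp
      rw [eL, eR] at hmul
      exact hmul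
    have hint : ∫ ω, |u ω| ^ j * |v ω| ^ l ∂μ ≤ ∫ ω, C1 * |u ω| ^ n + C2 * |v ω| ^ n ∂μ := by
      refine integral_mono_of_nonneg (ae_of_all _ fun ω => by positivity)
        ((hui.const_mul C1).add (hvi.const_mul C2)) (ae_of_all _ hpt)
    have heval : ∫ ω, C1 * |u ω| ^ n + C2 * |v ω| ^ n ∂μ = a ^ j * b ^ l := by
      rw [integral_add (hui.const_mul C1) (hvi.const_mul C2), integral_const_mul,
        integral_const_mul, ← hA, ← hB, hC1, hC2]
      have hAne : A ≠ 0 := hApos.ne'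
      have hBne : B ≠ 0 := hBpos.ne'
      have e1 : a ^ j * b ^ l * (j : ℝ) / ((n : ℝ) * A) * A = a ^ j * b ^ l * (j : ℝ) / n := by
        field_simp
      have e2 : a ^ j * b ^ l * (l : ℝ) / ((n : ℝ) * B) * B = a ^ j * b ^ l * (l : ℝ) / n := by
        field_simp
      rw [e1, e2]
      have e3 : a ^ j * b ^ l * (j : ℝ) / n + a ^ j * b ^ l * (l : ℝ) / n
          = a ^ j * b ^ l * ((j : ℝ) + (l : ℝ)) / n := by ring
      rw [e3, hjn, mul_div_assoc, div_self hnne, mul_one]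
    calc ∫ ω, |u ω| ^ j * |v ω| ^ l ∂μ ≤ a ^ j * b ^ l := by rw [heval] at hint; exact hint
      _ = _ := rfl

lemma step_ineq {Ω : Type*} {m0 : MeasurableSpace Ω} {μ : Measure Ω} [IsProbabilityMeasure μ]
    {𝓖 : MeasurableSpace Ω} (h𝓖 : 𝓖 ≤ m0) (m : ℕ) (hm : 1 ≤ m) (X d : Ω → ℝ)
    (hX : StronglyMeasurable[𝓖] X) (hd : AEStronglyMeasurable[m0] d μ)
    (hXi : Integrable (fun ω => X ω ^ (2 * m)) μ)
    (hdi : Integrable (fun ω => d ω ^ (2 * m)) μ)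
    (hcond : μ[d|𝓖] =ᵐ[μ] 0) :
    Integrable (fun ω => (X ω + d ω) ^ (2 * m)) μ ∧
      ∫ ω, (X ω + d ω) ^ (2 * m) ∂μ ≤
        ((∫ ω, X ω ^ (2 * m) ∂μ) ^ ((m : ℝ)⁻¹)
          + ((2 * m : ℝ) - 1) ^ 2 * (∫ ω, d ω ^ (2 * m) ∂μ) ^ ((m : ℝ)⁻¹)) ^ m := by
  have heven : ∀ x : ℝ, |x| ^ (2 * m) = x ^ (2 * m) := fun x =>
    Even.pow_abs (even_two_mul m) x
  have hXm : AEStronglyMeasurable[m0] X μ := (hX.mono h𝓖).aestronglyMeasurable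
  have huin : Integrable (fun ω => |X ω| ^ (2 * m)) μ := by
    simpa only [heven] using hXi
  have hvin : Integrable (fun ω => |d ω| ^ (2 * m)) μ := by
    simpa only [heven] using hdi
  have pw : ∀ (x y : ℝ) (k : ℕ), k ≤ 2 * m →
      |x ^ k * y ^ (2 * m - k)| ≤ |x| ^ (2 * m) + |y| ^ (2 * m) := by
    intro x y k hk
    rw [abs_mul, abs_pow, abs_pow]
    have h1 : |x| ^ k ≤ max |x| |y| ^ k :=
      pow_le_pow_left₀ (abs_nonneg _) (le_max_left _ _) _
    have h2 : |y| ^ (2 * m - k) ≤ max |x| |y| ^ (2 * m - k) :=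
      pow_le_pow_left₀ (abs_nonneg _) (le_max_right _ _) _
    have h3 : |x| ^ k * |y| ^ (2 * m - k) ≤ max |x| |y| ^ (2 * m) := by
      calc |x| ^ k * |y| ^ (2 * m - k) ≤ max |x| |y| ^ k * max |x| |y| ^ (2 * m - k) :=
          mul_le_mul h1 h2 (by positivity) (by positivity)
        _ = max |x| |y| ^ (2 * m) := by rw [← pow_add]; congr 1; omega
    refine h3.trans ?_
    rcases max_cases |x| |y| with ⟨hmax, _⟩ | ⟨hmax, _⟩ <;> rw [hmax]
    · exact le_add_of_nonneg_right (by positivity)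
    · exact le_add_of_nonneg_left (by positivity)
  have hcross : ∀ k, k ≤ 2 * m → Integrable (fun ω => X ω ^ k * d ω ^ (2 * m - k)) μ := by
    intro k hk
    refine Integrable.mono (huin.add hvin)
      ((hXm.aemeasurable.pow_const k).mul (hd.aemeasurable.pow_const _)).aestronglyMeasurable
      (ae_of_all _ fun ω => ?_)
    rw [Real.norm_eq_abs, Real.norm_eq_abs]
    exact (pw _ _ k hk).trans (le_abs_self _)
  have hbin : (fun ω => (X ω + d ω) ^ (2 * m)) =
      fun ω => ∑ k ∈ range (2 * m + 1), X ω ^ k * d ω ^ (2 * m - k) * ((2 * m).choose k : ℝ) := by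
    funext ω
    rw [add_pow]
  have hInt : Integrable (fun ω => (X ω + d ω) ^ (2 * m)) μ := by
    rw [hbin]
    refine integrable_finset_sum _ fun k hk => ?_
    rw [Finset.mem_range] at hk
    exact (hcross k (by omega)).mul_const _
  refine ⟨hInt, ?_⟩
  set A := ∫ ω, X ω ^ (2 * m) ∂μ with hA
  set B := ∫ ω, d ω ^ (2 * m) ∂μ with hB
  have hA0 : 0 ≤ A := integral_nonneg fun ω => (even_two_mul m).pow_nonneg _
  have hB0 : 0 ≤ B := integral_nonneg fun ω => (even_two_mul m).pow_nonneg _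
  set a := A ^ (((2 * m : ℕ) : ℝ))⁻¹ with ha
  set b := B ^ (((2 * m : ℕ) : ℝ))⁻¹ with hb
  have ha0 : 0 ≤ a := Real.rpow_nonneg hA0 _
  have hb0 : 0 ≤ b := Real.rpow_nonneg hB0 _
  have han : a ^ (2 * m) = A := Real.rpow_inv_natCast_pow hA0 (by omega)
  have hbn : b ^ (2 * m) = B := Real.rpow_inv_natCast_pow hB0 (by omega)
  have hAabs : (∫ ω, |X ω| ^ (2 * m) ∂μ) = A := by
    rw [hA]
    congr 1
    funext ω
    exact heven _
  have hBabs : (∫ ω, |d ω| ^ (2 * m) ∂μ) = B := by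
    rw [hB]
    congr 1
    funext ω
    exact heven _
  -- the k = 2m-1 term vanishes
  have hzero : ∫ ω, X ω ^ (2 * m - 1) * d ω ^ (2 * m - (2 * m - 1)) ∂μ = 0 := by
    have h1 : 2 * m - (2 * m - 1) = 1 := by omega
    rw [h1]
    simp only [pow_one]
    have hdint : Integrable d μ := by
      refine Integrable.mono ((integrable_const (1 : ℝ)).add hvin) hd (ae_of_all _ fun ω => ?_)
      rw [Real.norm_eq_abs, Real.norm_eq_abs]
      have habs : (0:ℝ) ≤ 1 + |d ω| ^ (2 * m) := by positivity
      simp only [Pi.add_apply]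
      rw [abs_of_nonneg habs]
      rcases le_total |d ω| 1 with h | h
      · have : (0:ℝ) ≤ |d ω| ^ (2 * m) := by positivity
        linarith
      · have : |d ω| ≤ |d ω| ^ (2 * m) := by
          calc |d ω| = |d ω| ^ 1 := (pow_one _).symm
            _ ≤ |d ω| ^ (2 * m) := pow_le_pow_right₀ h (by omega)
        linarith
    have hXd : Integrable (fun ω => X ω ^ (2 * m - 1) * d ω) μ := by
      have := hcross (2 * m - 1) (by omega)
      have h2 : 2 * m - (2 * m - 1) = 1 := by omega
      simpa only [h2, pow_one] using this
    have hXpow : StronglyMeasurable[𝓖] (fun ω => X ω ^ (2 * m - 1)) := hX.pow _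
    have hpull :=
      condExp_mul_of_stronglyMeasurable_left (m := 𝓖) (μ := μ) hXpow hXd hdint
    have hzero_ae : (fun ω => X ω ^ (2 * m - 1)) * μ[d|𝓖] =ᵐ[μ] 0 := by
      filter_upwards [hcond] with ω hω
      simp only [Pi.mul_apply, Pi.zero_apply] at hω ⊢
      rw [hω, mul_zero]
    calc ∫ ω, X ω ^ (2 * m - 1) * d ω ∂μ
        = ∫ ω, ((fun ω => X ω ^ (2 * m - 1)) * d) ω ∂μ := rfl
      _ = ∫ ω, (μ[(fun ω => X ω ^ (2 * m - 1)) * d|𝓖]) ω ∂μ := (integral_condExp h𝓖).symm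
      _ = ∫ ω, ((fun ω => X ω ^ (2 * m - 1)) * μ[d|𝓖]) ω ∂μ := integral_congr_ae hpull
      _ = 0 := by rw [integral_congr_ae hzero_ae]; simp
  -- termwise bound
  have hterm : ∀ k ∈ range (2 * m + 1),
      (∫ ω, X ω ^ k * d ω ^ (2 * m - k) ∂μ) * ((2 * m).choose k : ℝ)
        ≤ (if k = 2 * m - 1 then 0 else a ^ k * b ^ (2 * m - k) * ((2 * m).choose k : ℝ)) := by
    intro k hk
    rw [Finset.mem_range] at hk
    by_cases hk1 : k = 2 * m - 1
    · rw [if_pos hk1, hk1, hzero, zero_mul]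
    · rw [if_neg hk1]
      refine mul_le_mul_of_nonneg_right ?_ (by positivity)
      rcases Nat.eq_or_lt_of_le (Nat.lt_succ_iff.mp hk) with hk2 | hklt
      · -- k = 2m
        rw [hk2, Nat.sub_self]
        simp only [pow_zero, mul_one]
        rw [han]
      · by_cases hk0 : k = 0
        · rw [hk0, Nat.sub_zero]
          simp only [pow_zero, one_mul]
          rw [hbn]
        · -- Hölder case : 1 ≤ k, 2m - k ≥ 2
          have hle : ∫ ω, X ω ^ k * d ω ^ (2 * m - k) ∂μ
              ≤ ∫ ω, |X ω| ^ k * |d ω| ^ (2 * m - k) ∂μ := by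
            refine integral_mono (hcross k (by omega)) ?_ fun ω => ?_
            · have := (hcross k (by omega)).abs
              simpa only [abs_mul, abs_pow] using this
            · calc X ω ^ k * d ω ^ (2 * m - k) ≤ |X ω ^ k * d ω ^ (2 * m - k)| := le_abs_self _
                _ = |X ω| ^ k * |d ω| ^ (2 * m - k) := by rw [abs_mul, abs_pow, abs_pow]
          refine hle.trans ?_
          have hhold := @holder_pow Ω m0 μ X d (2 * m) k (2 * m - k) (by omega) (by omega)
            (by omega) huin hvin
          rw [hAabs, hBabs] at hhold
          exact hhold
  -- sum up
  have hchoose : ((2 * m).choose (2 * m - 1) : ℝ) = (2 * m : ℕ) := by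
    have h1 : (2 * m).choose (2 * m - 1) = (2 * m).choose 1 := by
      have := Nat.choose_symm (n := 2 * m) (k := 1) (by omega)
      simpa using this
    rw [h1, Nat.choose_one_right]
  have hmem : 2 * m - 1 ∈ range (2 * m + 1) := by
    rw [Finset.mem_range]
    omega
  have hfull : (a + b) ^ (2 * m)
      = ∑ k ∈ range (2 * m + 1), a ^ k * b ^ (2 * m - k) * ((2 * m).choose k : ℝ) := add_pow a b _
  have hsumle : ∫ ω, (X ω + d ω) ^ (2 * m) ∂μ
      ≤ (a + b) ^ (2 * m) - a ^ (2 * m - 1) * b * (2 * m : ℕ) := by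
    calc ∫ ω, (X ω + d ω) ^ (2 * m) ∂μ
        = ∑ k ∈ range (2 * m + 1),
            (∫ ω, X ω ^ k * d ω ^ (2 * m - k) ∂μ) * ((2 * m).choose k : ℝ) := by
          rw [hbin, integral_finset_sum _ fun k hk => by
            rw [Finset.mem_range] at hk
            exact (hcross k (by omega)).mul_const _]
          simp only [integral_mul_const]
      _ ≤ ∑ k ∈ range (2 * m + 1),
            (if k = 2 * m - 1 then 0 else a ^ k * b ^ (2 * m - k) * ((2 * m).choose k : ℝ)) :=
          Finset.sum_le_sum hterm
      _ = (a + b) ^ (2 * m) - a ^ (2 * m - 1) * b * (2 * m : ℕ) := by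
          have hg : ∀ k, (if k = 2 * m - 1 then (0:ℝ)
              else a ^ k * b ^ (2 * m - k) * ((2 * m).choose k : ℝ))
              = a ^ k * b ^ (2 * m - k) * ((2 * m).choose k : ℝ)
                - (if k = 2 * m - 1
                    then a ^ k * b ^ (2 * m - k) * ((2 * m).choose k : ℝ) else 0) := by
            intro k
            split <;> simp
          rw [Finset.sum_congr rfl fun k _ => hg k, Finset.sum_sub_distrib,
            Finset.sum_ite_eq' (range (2 * m + 1)) (2 * m - 1), if_pos hmem, ← hfull]
          have h1 : 2 * m - (2 * m - 1) = 1 := by omega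
          rw [h1, hchoose, pow_one]
  have hlemA := lemA m hm a b ha0 hb0
  have hmain : ∫ ω, (X ω + d ω) ^ (2 * m) ∂μ
      ≤ (a ^ 2 + ((2 * m : ℝ) - 1) ^ 2 * b ^ 2) ^ m := by
    have hc : ((2 * m : ℕ) : ℝ) = (2 * m : ℝ) := by push_cast; ring
    rw [hc] at hsumle
    linarith
  have hm0 : (m : ℝ) ≠ 0 := by positivity
  have hexp2 : (((2 * m : ℕ) : ℝ))⁻¹ * ((2 : ℕ) : ℝ) = (m : ℝ)⁻¹ := by
    push_cast
    rw [mul_inv, mul_comm ((2:ℝ))⁻¹ _, mul_assoc]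
    norm_num
  have ea : a ^ 2 = A ^ ((m : ℝ)⁻¹) := by
    rw [ha, ← Real.rpow_natCast (A ^ (((2 * m : ℕ) : ℝ))⁻¹) 2, ← Real.rpow_mul hA0, hexp2]
  have eb : b ^ 2 = B ^ ((m : ℝ)⁻¹) := by
    rw [hb, ← Real.rpow_natCast (B ^ (((2 * m : ℕ) : ℝ))⁻¹) 2, ← Real.rpow_mul hB0, hexp2]
  rw [ea, eb] at hmain
  exact hmain

lemma chain_ineq {Ω : Type*} {m0 : MeasurableSpace Ω} (μ : Measure Ω) [IsProbabilityMeasure μ]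
    (𝓕 : Filtration ℤ m0) (Δ : ℤ → Ω → ℝ) (m : ℕ) (hm : 1 ≤ m)
    (hadapted : ∀ i, StronglyMeasurable[𝓕 i] (Δ i))
    (hmds : ∀ i, μ[Δ i | 𝓕 (i - 1)] =ᵐ[μ] 0)
    (hint : ∀ i, Integrable (fun ω => Δ i ω ^ (2 * m)) μ) (s : Finset ℤ) :
    Integrable (fun ω => (∑ i ∈ s, Δ i ω) ^ (2 * m)) μ ∧
      ∫ ω, (∑ i ∈ s, Δ i ω) ^ (2 * m) ∂μ ≤
        (((2 * m : ℝ) - 1) ^ 2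
          * ∑ i ∈ s, (∫ ω, Δ i ω ^ (2 * m) ∂μ) ^ ((m : ℝ)⁻¹)) ^ m := by
  classical
  induction s using Finset.induction_on_max with
  | empty =>
    simp only [Finset.sum_empty, zero_pow (by omega : 2 * m ≠ 0), mul_zero, integral_zero,
      zero_pow (by omega : m ≠ 0)]
    exact ⟨integrable_const 0, le_rfl⟩
  | insert a s ha ih =>
    obtain ⟨ihInt, ihLe⟩ := ih
    have hnotmem : a ∉ s := fun h => lt_irrefl a (ha a h)
    have hX : StronglyMeasurable[𝓕 (a - 1)] (fun ω => ∑ i ∈ s, Δ i ω) := by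
      have hX' : StronglyMeasurable[𝓕 (a - 1)] (∑ i ∈ s, Δ i) :=
        Finset.stronglyMeasurable_sum _ fun i hi =>
          (hadapted i).mono (𝓕.mono (by have := ha i hi; omega))
      have : (∑ i ∈ s, Δ i) = fun ω => ∑ i ∈ s, Δ i ω := by
        funext ω
        simp [Finset.sum_apply]
      rwa [this] at hX'
    have hstep := step_ineq (μ := μ) (𝓕.le (a - 1)) m hm _ (Δ a) hX
      ((hadapted a).mono (𝓕.le a)).aestronglyMeasurable ihInt (hint a) (hmds a)
    have hfun : (fun ω => (∑ i ∈ insert a s, Δ i ω) ^ (2 * m))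
        = fun ω => ((∑ i ∈ s, Δ i ω) + Δ a ω) ^ (2 * m) := by
      funext ω
      rw [Finset.sum_insert hnotmem, add_comm]
    constructor
    · rw [hfun]
      exact hstep.1
    · rw [hfun]
      have h2 := hstep.2
      refine h2.trans ?_
      have hN : ∀ i, (0:ℝ) ≤ (∫ ω, Δ i ω ^ (2 * m) ∂μ) ^ ((m : ℝ)⁻¹) := fun i =>
        Real.rpow_nonneg (integral_nonneg fun ω => (even_two_mul m).pow_nonneg _) _
      have hK : (0:ℝ) ≤ ((2 * m : ℝ) - 1) ^ 2 := sq_nonneg _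
      have hbase : (0:ℝ) ≤ ((2 * m : ℝ) - 1) ^ 2
          * ∑ i ∈ s, (∫ ω, Δ i ω ^ (2 * m) ∂μ) ^ ((m : ℝ)⁻¹) :=
        mul_nonneg hK (Finset.sum_nonneg fun i _ => hN i)
      have h1 : (∫ ω, (∑ i ∈ s, Δ i ω) ^ (2 * m) ∂μ) ^ ((m : ℝ)⁻¹)
          ≤ ((2 * m : ℝ) - 1) ^ 2
            * ∑ i ∈ s, (∫ ω, Δ i ω ^ (2 * m) ∂μ) ^ ((m : ℝ)⁻¹) := by
        have hmono := Real.rpow_le_rpow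
          (integral_nonneg fun ω => (even_two_mul m).pow_nonneg _) ihLe
          (by positivity : (0:ℝ) ≤ (m : ℝ)⁻¹)
        refine hmono.trans (le_of_eq ?_)
        exact Real.pow_rpow_inv_natCast hbase (by omega)
      refine pow_le_pow_left₀ (add_nonneg (Real.rpow_nonneg (integral_nonneg fun ω =>
        (even_two_mul m).pow_nonneg _) _) (mul_nonneg hK (hN a))) ?_ m
      rw [Finset.sum_insert hnotmem, mul_add]
      have h2m1 : ((2 * m : ℝ) - 1) ^ 2 * (∫ ω, Δ a ω ^ (2 * m) ∂μ) ^ ((m : ℝ)⁻¹)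
          ≤ ((2 * m : ℝ) - 1) ^ 2 * (∫ ω, Δ a ω ^ (2 * m) ∂μ) ^ ((m : ℝ)⁻¹) := le_rfl
      linarith [h1]

/-- Burkholder + Hölder moment bound: if `f - E f = ∑_i Δ_i` for a finite martingale
difference sequence with `Δ_i² ≤ Ψ_i² c_i` a.s., the `Ψ_i` identically distributed with
`E[Ψ₀^(2p)] < ∞`, and `(c_i)` nonnegative summable, then
`E[(f - E f)^(2p)] ≤ (2p-1)^(2p) E[Ψ₀^(2p)] (∑_i c_i)^p`. -/
theorem moment_bound_via_burkholder {Ω : Type*} {m0 : MeasurableSpace Ω}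
    (μ : Measure Ω) [IsProbabilityMeasure μ]
    (𝓕 : Filtration ℤ m0) (Δ : ℤ → Ω → ℝ) (s : Finset ℤ)
    (p : ℕ) (hp : 1 ≤ p) (f : Ω → ℝ) (hf : MemLp f (2 * p) μ)
    (hadapted : ∀ i, StronglyMeasurable[𝓕 i] (Δ i))
    (hmds : ∀ i, μ[Δ i | 𝓕 (i - 1)] =ᵐ[μ] 0)
    (hsupp : ∀ i ∉ s, Δ i = 0)
    (hsum : ∀ ω, f ω - ∫ x, f x ∂μ = ∑ i ∈ s, Δ i ω)
    (Ψ : ℤ → Ω → ℝ) (hΨnn : ∀ i ω, 0 ≤ Ψ i ω)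
    (hΨmeas : ∀ i, Measurable (Ψ i))
    (c : ℤ → ℝ) (hcnn : ∀ i, 0 ≤ c i) (hc : Summable c)
    (hdom : ∀ i, ∀ᵐ ω ∂μ, (Δ i ω) ^ 2 ≤ (Ψ i ω) ^ 2 * c i)
    (hident : ∀ i, ProbabilityTheory.IdentDistrib (Ψ i) (Ψ 0) μ μ)
    (hΨint : Integrable (fun ω => (Ψ 0 ω) ^ (2 * p)) μ) :
    (∫ ω, (f ω - ∫ x, f x ∂μ) ^ (2 * p) ∂μ) ≤
      ((2 * p : ℝ) - 1) ^ (2 * p) * (∫ ω, (Ψ 0 ω) ^ (2 * p) ∂μ) * (∑' i, c i) ^ p := by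
  set E := ∫ ω, (Ψ 0 ω) ^ (2 * p) ∂μ with hE
  have hE0 : 0 ≤ E := integral_nonneg fun ω => (even_two_mul p).pow_nonneg _
  have hp0 : (p : ℝ) ≠ 0 := by positivity
  -- identically distributed powers
  have hIdent : ∀ i, ProbabilityTheory.IdentDistrib (fun ω => Ψ i ω ^ (2 * p))
      (fun ω => Ψ 0 ω ^ (2 * p)) μ μ := fun i =>
    (hident i).comp (measurable_id.pow_const (2 * p))
  have hΨi_int : ∀ i, Integrable (fun ω => Ψ i ω ^ (2 * p)) μ := fun i =>
    (hIdent i).integrable_iff.2 hΨint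
  have hΨi_eq : ∀ i, ∫ ω, Ψ i ω ^ (2 * p) ∂μ = E := fun i => (hIdent i).integral_eq
  -- domination of Δ i ^ (2p)
  have hdom' : ∀ i, ∀ᵐ ω ∂μ, Δ i ω ^ (2 * p) ≤ Ψ i ω ^ (2 * p) * c i ^ p := by
    intro i
    filter_upwards [hdom i] with ω hω
    have h1 : (Δ i ω ^ 2) ^ p ≤ (Ψ i ω ^ 2 * c i) ^ p :=
      pow_le_pow_left₀ (sq_nonneg _) hω p
    calc Δ i ω ^ (2 * p) = (Δ i ω ^ 2) ^ p := by rw [← pow_mul]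
      _ ≤ (Ψ i ω ^ 2 * c i) ^ p := h1
      _ = Ψ i ω ^ (2 * p) * c i ^ p := by rw [mul_pow, ← pow_mul]
  have hΔint : ∀ i, Integrable (fun ω => Δ i ω ^ (2 * p)) μ := by
    intro i
    refine Integrable.mono ((hΨi_int i).mul_const (c i ^ p))
      (((hadapted i).mono (𝓕.le i)).aestronglyMeasurable.aemeasurable.pow_const
        (2 * p)).aestronglyMeasurable ?_
    filter_upwards [hdom' i] with ω hω
    rw [Real.norm_eq_abs, Real.norm_eq_abs, abs_of_nonneg ((even_two_mul p).pow_nonneg _)]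
    refine hω.trans (le_abs_self _)
  have hIle : ∀ i, (∫ ω, Δ i ω ^ (2 * p) ∂μ) ≤ E * c i ^ p := by
    intro i
    have h1 : (∫ ω, Δ i ω ^ (2 * p) ∂μ) ≤ ∫ ω, Ψ i ω ^ (2 * p) * c i ^ p ∂μ := by
      refine integral_mono_of_nonneg (ae_of_all _ fun ω => (even_two_mul p).pow_nonneg _)
        ((hΨi_int i).mul_const _) (hdom' i)
    rw [integral_mul_const, hΨi_eq i] at h1
    exact h1
  -- key chain inequality
  obtain ⟨-, hchain⟩ := chain_ineq μ 𝓕 Δ p hp hadapted hmds hΔint s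
  -- bound the rpow terms
  have hNle : ∀ i, (∫ ω, Δ i ω ^ (2 * p) ∂μ) ^ ((p : ℝ)⁻¹) ≤ E ^ ((p : ℝ)⁻¹) * c i := by
    intro i
    have h1 := Real.rpow_le_rpow (integral_nonneg fun ω => (even_two_mul p).pow_nonneg _)
      (hIle i) (by positivity : (0:ℝ) ≤ (p : ℝ)⁻¹)
    refine h1.trans (le_of_eq ?_)
    rw [Real.mul_rpow hE0 (pow_nonneg (hcnn i) p),
      Real.pow_rpow_inv_natCast (hcnn i) (by omega)]
  have hsum_le : ∑ i ∈ s, (∫ ω, Δ i ω ^ (2 * p) ∂μ) ^ ((p : ℝ)⁻¹)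
      ≤ E ^ ((p : ℝ)⁻¹) * ∑' i, c i := by
    calc ∑ i ∈ s, (∫ ω, Δ i ω ^ (2 * p) ∂μ) ^ ((p : ℝ)⁻¹)
        ≤ ∑ i ∈ s, E ^ ((p : ℝ)⁻¹) * c i := Finset.sum_le_sum fun i _ => hNle i
      _ = E ^ ((p : ℝ)⁻¹) * ∑ i ∈ s, c i := by rw [Finset.mul_sum]
      _ ≤ E ^ ((p : ℝ)⁻¹) * ∑' i, c i := by
          refine mul_le_mul_of_nonneg_left ?_ (Real.rpow_nonneg hE0 _)
          exact Summable.sum_le_tsum s (fun i _ => hcnn i) hc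
  have hT0 : 0 ≤ ∑' i, c i := tsum_nonneg hcnn
  have hK : (0:ℝ) ≤ ((2 * p : ℝ) - 1) ^ 2 := sq_nonneg _
  have hfinal : ∫ ω, (∑ i ∈ s, Δ i ω) ^ (2 * p) ∂μ
      ≤ (((2 * p : ℝ) - 1) ^ 2 * (E ^ ((p : ℝ)⁻¹) * ∑' i, c i)) ^ p := by
    refine hchain.trans ?_
    refine pow_le_pow_left₀ ?_ (mul_le_mul_of_nonneg_left hsum_le hK) p
    refine mul_nonneg hK (Finset.sum_nonneg fun i _ =>
      Real.rpow_nonneg (integral_nonneg fun ω => (even_two_mul p).pow_nonneg _) _)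
  have hLHS : ∫ ω, (f ω - ∫ x, f x ∂μ) ^ (2 * p) ∂μ
      = ∫ ω, (∑ i ∈ s, Δ i ω) ^ (2 * p) ∂μ := by
    congr 1
    funext ω
    rw [hsum ω]
  rw [hLHS]
  refine hfinal.trans (le_of_eq ?_)
  rw [mul_pow, mul_pow, ← pow_mul, Real.rpow_inv_natCast_pow hE0 (by omega)]
  ring
end
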